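/- Fix 0 < ε = 1/N < 1/2 and α ∈ (0,1) with N^α an integer. Let X̃_x = X_x − X_x(α), where X_x(t) = μ(A_{ε^t}(x)). Then E[X̃_x²] = E[X̃_x X_x] = (1−α) log N for x ∈ X_ε, and for x ≠ x': E[X̃_x X_{x'}] = (q(x,x') − α) log N + O(1) if α < q(x,x') ≤ 1, and E[X̃_x X_{x'}] = 0 if 0 ≤ q(x,x') ≤ α, where q(x,x') = −log‖x−x'‖/log N. -/

import Mathlib

open MeasureTheory ProbabilityTheory

/-- Distance on the circle `[0,1]_∼`. -/
noncomputable def circDist (x y : ℝ) : ℝ := min |x - y| (1 - |x - y|)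

/-- The width profile `f(y) = y` for `y < 1/2` and `f(y) = 1/2` otherwise. -/
noncomputable def coneF (y : ℝ) : ℝ := if y < 1 / 2 then y else 1 / 2

/-- The cone-like subset `A_u(x)` of the half-cylinder `[0,1]_∼ × (0,∞)`. -/
def coneSet (u x : ℝ) : Set (ℝ × ℝ) :=
  {p | p.1 ∈ Set.Ico (0 : ℝ) 1 ∧ u ≤ p.2 ∧ circDist p.1 x ≤ coneF p.2 / 2}

/-- The overlap `q(x,x') = −log‖x−x'‖ / log N`. -/
noncomputable def overlap (N : ℕ) (x x' : ℝ) : ℝ := -Real.log (circDist x x') / Real.log N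

open Set

set_option linter.unusedVariables false
set_option linter.unreachableTactic false
set_option linter.unusedTactic false
set_option linter.deprecated false
set_option maxHeartbeats 1000000

lemma ofReal_max0 (t : ℝ) : ENNReal.ofReal (max 0 t) = ENNReal.ofReal t := by
  rcases le_total t 0 with h | h
  · rw [max_eq_left h, ENNReal.ofReal_zero, ENNReal.ofReal_eq_zero.2 h]
  · rw [max_eq_right h]

lemma circDist_shift_k {a b a' b' k : ℝ} (h : |a - b| ≤ 1) (h' : |a' - b'| ≤ 1)
    (hk : k = 1 ∨ k = 0 ∨ k = -1) (hab : a' - b' = a - b + k) :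
    circDist a' b' = circDist a b := by
  unfold circDist
  rcases hk with hk | hk | hk <;> subst hk <;>
    rcases abs_cases (a - b) with ⟨e1, e2⟩ | ⟨e1, e2⟩ <;>
    rcases abs_cases (a' - b') with ⟨f1, f2⟩ | ⟨f1, f2⟩ <;>
    rw [e1, f1] <;>
    rcases abs_le.1 h with ⟨g1, g2⟩ <;> rcases abs_le.1 h' with ⟨g1', g2'⟩ <;>
    rw [min_def] <;> rw [min_def] <;> split_ifs <;> linarith

lemma continuous_circDist_left (y : ℝ) : Continuous (fun u => circDist u y) := by
  unfold circDist
  exact ((continuous_id.sub continuous_const).abs).min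
    (continuous_const.sub (continuous_id.sub continuous_const).abs)

lemma circDist_triangle' {s x x' : ℝ} (hs : s ∈ Ico (0:ℝ) 1) (hx : x ∈ Ico (0:ℝ) 1)
    (hx' : x' ∈ Ico (0:ℝ) 1) : circDist x x' ≤ circDist s x + circDist s x' := by
  obtain ⟨hs0, hs1⟩ := hs; obtain ⟨hx0, hx1⟩ := hx; obtain ⟨hx0', hx1'⟩ := hx'
  unfold circDist
  rcases abs_cases (s - x) with ⟨e1, e2⟩ | ⟨e1, e2⟩ <;>
  rcases abs_cases (s - x') with ⟨f1, f2⟩ | ⟨f1, f2⟩ <;>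
  rcases abs_cases (x - x') with ⟨g1, g2⟩ | ⟨g1, g2⟩ <;>
  rw [e1, f1, g1] <;>
  simp only [min_le_iff, le_min_iff] <;> rw [min_def, min_def] <;> split_ifs <;>
  first
  | (left; linarith)
  | (right; linarith)

lemma shift_vol (A : Set ℝ) (hA : MeasurableSet A) (c : ℝ) (hc : c ∈ Ico (0:ℝ) 1) :
    volume {s ∈ Ico (0:ℝ) 1 | s + c - (if s < 1 - c then 0 else 1) ∈ A}
      = volume (A ∩ Ico (0:ℝ) 1) := by
  obtain ⟨hc0, hc1⟩ := hc
  have h1 : {s ∈ Ico (0:ℝ) 1 | s + c - (if s < 1 - c then 0 else 1) ∈ A}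
      = ((fun s => s + c) ⁻¹' (A ∩ Ico c 1)) ∪ ((fun s => s + (c-1)) ⁻¹' (A ∩ Ico 0 c)) := by
    ext s
    simp only [mem_setOf_eq, mem_union, mem_preimage, mem_inter_iff, mem_Ico]
    constructor
    · rintro ⟨⟨h0, h1⟩, hm⟩
      split_ifs at hm with h
      · left; refine ⟨by simpa using hm, by linarith, by linarith⟩
      · right; refine ⟨by rw [show s + (c-1) = s + c - 1 by ring]; exact hm, by linarith, by linarith⟩
    · rintro (⟨hm, h0, h1'⟩ | ⟨hm, h0, h1'⟩)
      · have hs : s < 1 - c := by linarith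
        refine ⟨⟨by linarith, by linarith⟩, by simpa [hs] using hm⟩
      · have hs : ¬ (s < 1 - c) := by push_neg; linarith
        refine ⟨⟨by linarith, by linarith⟩, ?_⟩
        simp only [hs, if_false]
        rw [show s + c - 1 = s + (c-1) by ring]; exact hm
  rw [h1]
  have hd : Disjoint ((fun s => s + c) ⁻¹' (A ∩ Ico c 1)) ((fun s => s + (c-1)) ⁻¹' (A ∩ Ico 0 c)) := by
    rw [disjoint_left]
    intro s hs1 hs2
    simp only [mem_preimage, mem_inter_iff, mem_Ico] at hs1 hs2
    linarith [hs1.2.1, hs2.2.2]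
  rw [measure_union hd (by measurability)]
  have e1 : (fun s : ℝ => s + c) ⁻¹' (A ∩ Ico c 1) = (fun s : ℝ => c + s) ⁻¹' (A ∩ Ico c 1) := by
    simp [add_comm]
  have e2 : (fun s : ℝ => s + (c-1)) ⁻¹' (A ∩ Ico 0 c) = (fun s : ℝ => (c-1) + s) ⁻¹' (A ∩ Ico 0 c) := by
    simp [add_comm]
  rw [e1, e2, measure_preimage_add, measure_preimage_add]
  rw [← measure_union]
  · congr 1
    ext s
    simp only [mem_union, mem_inter_iff, mem_Ico]
    constructor
    · rintro (⟨h, ha, hb⟩ | ⟨h, ha, hb⟩) <;> exact ⟨h, by linarith, by linarith⟩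
    · rintro ⟨h, ha, hb⟩
      rcases le_or_gt c s with hcs | hcs
      · left; exact ⟨h, hcs, hb⟩
      · right; exact ⟨h, ha, hcs⟩
  · rw [disjoint_left]; intro s hs1 hs2
    simp only [mem_inter_iff, mem_Ico] at hs1 hs2
    linarith [hs1.2.1, hs2.2.2]
  · exact hA.inter measurableSet_Ico

lemma base_slice {δ r : ℝ} (hδ : δ ∈ Ico (0:ℝ) 1) (hr0 : 0 < r) (hr : r < 1/4) :
    volume ({u | circDist u 0 ≤ r ∧ circDist u δ ≤ r} ∩ Ico (0:ℝ) 1)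
      = ENNReal.ofReal (max 0 (2*r - min δ (1-δ))) := by
  obtain ⟨hδ0, hδ1⟩ := hδ
  have habs : ∀ u : ℝ, |u - (0:ℝ)| = |u| := by intro u; rw [sub_zero]
  rcases le_or_gt δ (1/2) with hhalf | hhalf
  · -- δ ≤ 1/2, min = δ
    have hmin : min δ (1-δ) = δ := min_eq_left (by linarith)
    have hset : {u | circDist u 0 ≤ r ∧ circDist u δ ≤ r} ∩ Ico (0:ℝ) 1
        = Icc (max 0 (δ-r)) r ∪ Ico (1+δ-r) 1 := by
      ext u
      simp only [mem_inter_iff, mem_setOf_eq, mem_Ico, mem_union, mem_Icc, circDist,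
        sub_zero, min_le_iff, max_le_iff]
      constructor
      · rintro ⟨⟨h1 | h1, h2 | h2⟩, hu0, hu1⟩ <;>
          rw [abs_of_nonneg hu0] at h1 <;>
          rcases abs_cases (u - δ) with ⟨f1, f2⟩ | ⟨f1, f2⟩ <;>
          rw [f1] at h2 <;>
          first
          | (left; exact ⟨⟨by linarith, by linarith⟩, by linarith⟩)
          | (right; exact ⟨by linarith, by linarith⟩)
          | (exfalso; linarith)
      · rintro (⟨⟨hm0, hmd⟩, hur⟩ | ⟨hu1, hu2⟩)
        · have hu0 : 0 ≤ u := hm0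
          have habs1 : |u| = u := abs_of_nonneg hu0
          have habs2 : |u - δ| ≤ r := abs_le.2 ⟨by linarith, by linarith⟩
          exact ⟨⟨Or.inl (by rw [habs1]; linarith), Or.inl habs2⟩, hu0, by linarith⟩
        · have hu0 : 0 ≤ u := by linarith
          have habs1 : |u| = u := abs_of_nonneg hu0
          have habs2 : |u - δ| = u - δ := abs_of_nonneg (by linarith)
          exact ⟨⟨Or.inr (by rw [habs1]; linarith), Or.inr (by rw [habs2]; linarith)⟩, hu0, hu2⟩
    rw [hset, hmin, measure_union _ measurableSet_Ico, Real.volume_Icc, Real.volume_Ico]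
    · rcases le_or_gt δ r with hc | hc
      · rw [max_eq_left (show δ - r ≤ 0 by linarith), ofReal_max0,
          ← ENNReal.ofReal_add (show (0:ℝ) ≤ r - 0 by linarith)
            (show (0:ℝ) ≤ 1 - (1+δ-r) by linarith)]
        congr 1; ring
      · rw [max_eq_right (show (0:ℝ) ≤ δ - r by linarith),
          show (1:ℝ) - (1+δ-r) = r - δ by ring,
          ENNReal.ofReal_eq_zero.2 (show r - δ ≤ 0 by linarith), add_zero, ofReal_max0]
        congr 1; ring
    · rw [disjoint_left]
      rintro u ⟨_, h2⟩ ⟨h3, _⟩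
      try simp only [mem_Ico] at *
      linarith
  · -- δ > 1/2, min = 1 - δ
    have hmin : min δ (1-δ) = 1 - δ := min_eq_right (by linarith)
    have hset : {u | circDist u 0 ≤ r ∧ circDist u δ ≤ r} ∩ Ico (0:ℝ) 1
        = Icc 0 (δ-1+r) ∪ (Ico (1-r) 1 ∩ Iic (δ+r)) := by
      ext u
      simp only [mem_inter_iff, mem_setOf_eq, mem_Ico, mem_union, mem_Icc, mem_Iic, circDist,
        sub_zero, min_le_iff]
      constructor
      · rintro ⟨⟨h1 | h1, h2 | h2⟩, hu0, hu1⟩ <;>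
          rw [abs_of_nonneg hu0] at h1 <;>
          rcases abs_cases (u - δ) with ⟨f1, f2⟩ | ⟨f1, f2⟩ <;>
          rw [f1] at h2 <;>
          first
          | (left; exact ⟨by linarith, by linarith⟩)
          | (right; exact ⟨⟨by linarith, by linarith⟩, by linarith⟩)
          | (exfalso; linarith)
      · rintro (⟨hm0, hmd⟩ | ⟨⟨hu1, hu2⟩, hu3⟩)
        · have habs1 : |u| = u := abs_of_nonneg hm0
          have habs2 : |u - δ| = δ - u := by rw [abs_sub_comm]; exact abs_of_nonneg (by linarith)
          exact ⟨⟨Or.inl (by rw [habs1]; linarith), Or.inr (by rw [habs2]; linarith)⟩, hm0, by linarith⟩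
        · have hu0 : 0 ≤ u := by linarith
          have habs1 : |u| = u := abs_of_nonneg hu0
          have habs2 : |u - δ| ≤ r := abs_le.2 ⟨by linarith, by linarith⟩
          exact ⟨⟨Or.inr (by rw [habs1]; linarith), Or.inl habs2⟩, hu0, hu2⟩
    rw [hset, measure_union _ (measurableSet_Ico.inter measurableSet_Iic), Real.volume_Icc, hmin]
    · have hpiece : volume (Ico (1-r) 1 ∩ Iic (δ+r)) = ENNReal.ofReal (min r (δ + 2*r - 1)) := by
        rcases le_or_gt 1 (δ+r) with hc | hc
        · have : Ico (1-r) 1 ∩ Iic (δ+r) = Ico (1-r) 1 := by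
            apply inter_eq_left.2
            intro u hu
            simp only [mem_Ico] at hu
            exact le_trans (le_of_lt hu.2) hc
          rw [this, Real.volume_Ico, min_eq_left (by linarith)]
          congr 1; ring
        · have : Ico (1-r) 1 ∩ Iic (δ+r) = Icc (1-r) (δ+r) := by
            ext u
            simp only [mem_inter_iff, mem_Ico, mem_Icc, mem_Iic]
            constructor
            · rintro ⟨⟨a, b⟩, c⟩; exact ⟨a, c⟩
            · rintro ⟨a, b⟩; exact ⟨⟨a, by linarith⟩, b⟩
          rw [this, Real.volume_Icc, min_eq_right (by linarith)]
          congr 1; ring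
      rw [hpiece]
      rcases le_or_gt (1-δ) r with hc | hc
      · rw [min_eq_left (show r ≤ δ + 2*r - 1 by linarith), ofReal_max0,
          ← ENNReal.ofReal_add (show (0:ℝ) ≤ δ-1+r - 0 by linarith) (show (0:ℝ) ≤ r by linarith)]
        congr 1; ring
      · rw [ENNReal.ofReal_eq_zero.2 (show δ-1+r - 0 ≤ 0 by linarith), zero_add,
          min_eq_right (show δ + 2*r - 1 ≤ r by linarith), ofReal_max0]
        congr 1; ring
    · rw [disjoint_left]
      rintro u ⟨_, h2⟩ ⟨⟨h3, _⟩, _⟩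
      linarith

lemma slice_vol {x x' r : ℝ} (hx : x ∈ Ico (0:ℝ) 1) (hx' : x' ∈ Ico (0:ℝ) 1)
    (hr0 : 0 < r) (hr : r < 1/4) :
    volume {s ∈ Ico (0:ℝ) 1 | circDist s x ≤ r ∧ circDist s x' ≤ r}
      = ENNReal.ofReal (max 0 (2*r - circDist x x')) := by
  obtain ⟨hx0, hx1⟩ := hx; obtain ⟨hx0', hx1'⟩ := hx'
  set c : ℝ := if x = 0 then 0 else 1 - x with hc_def
  have hc : c ∈ Ico (0:ℝ) 1 := by
    rw [hc_def]; split_ifs with h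
    · exact ⟨le_refl _, one_pos⟩
    · constructor <;> [linarith; (have : 0 < x := lt_of_le_of_ne hx0 (Ne.symm h); linarith)]
  set T : ℝ → ℝ := fun s => s + c - (if s < 1 - c then 0 else 1) with hT_def
  have hT_mem : ∀ s, s ∈ Ico (0:ℝ) 1 → T s ∈ Ico (0:ℝ) 1 := by
    intro s ⟨h0, h1⟩
    rw [hT_def]; dsimp only
    split_ifs with h <;> constructor <;> simp only [mem_Ico] at hc <;> first
      | linarith [hc.1, hc.2]
      | (push_neg at h; linarith [hc.1, hc.2])
  have hT_circ : ∀ s t, s ∈ Ico (0:ℝ) 1 → t ∈ Ico (0:ℝ) 1 →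
      circDist (T s) (T t) = circDist s t := by
    intro s t hs ht
    obtain ⟨hs0, hs1⟩ := hs; obtain ⟨ht0, ht1⟩ := ht
    obtain ⟨hTs0, hTs1⟩ := hT_mem s ⟨hs0, hs1⟩
    obtain ⟨hTt0, hTt1⟩ := hT_mem t ⟨ht0, ht1⟩
    apply circDist_shift_k (k := (if t < 1 - c then 0 else 1) - (if s < 1 - c then 0 else 1))
    · rw [abs_le]; constructor <;> linarith
    · rw [abs_le]; constructor <;> linarith
    · split_ifs <;> norm_num
    · rw [hT_def]; dsimp only; ring
  have hTx : T x = 0 := by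
    rw [hT_def]; dsimp only
    rcases eq_or_ne x 0 with h | h
    · have hc0 : c = 0 := by rw [hc_def, if_pos h]
      rw [hc0, h]
      norm_num
    · have hcx : c = 1 - x := by rw [hc_def, if_neg h]
      have hnot : ¬ x < 1 - c := by rw [hcx]; simp
      rw [if_neg hnot, hcx]
      ring
  have hδ : T x' ∈ Ico (0:ℝ) 1 := hT_mem x' ⟨hx0', hx1'⟩
  set δ := T x' with hδ_def
  have hA : MeasurableSet {u : ℝ | circDist u 0 ≤ r ∧ circDist u δ ≤ r} := by
    exact (measurableSet_le (continuous_circDist_left 0).measurable measurable_const).inter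
      (measurableSet_le (continuous_circDist_left δ).measurable measurable_const)
  have hseteq : {s ∈ Ico (0:ℝ) 1 | circDist s x ≤ r ∧ circDist s x' ≤ r}
      = {s ∈ Ico (0:ℝ) 1 | s + c - (if s < 1 - c then 0 else 1)
          ∈ {u : ℝ | circDist u 0 ≤ r ∧ circDist u δ ≤ r}} := by
    ext s
    simp only [mem_setOf_eq, mem_Ico]
    constructor
    · rintro ⟨⟨h0, h1⟩, hcx, hcx'⟩
      refine ⟨⟨h0, h1⟩, ?_, ?_⟩
      · show circDist (T s) 0 ≤ r
        rw [← hTx, hT_circ s x ⟨h0, h1⟩ ⟨hx0, hx1⟩]; exact hcx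
      · show circDist (T s) δ ≤ r
        rw [hδ_def, hT_circ s x' ⟨h0, h1⟩ ⟨hx0', hx1'⟩]; exact hcx'
    · rintro ⟨⟨h0, h1⟩, hcx, hcx'⟩
      refine ⟨⟨h0, h1⟩, ?_, ?_⟩
      · rw [← hT_circ s x ⟨h0, h1⟩ ⟨hx0, hx1⟩, hTx]; exact hcx
      · rw [← hT_circ s x' ⟨h0, h1⟩ ⟨hx0', hx1'⟩, ← hδ_def]; exact hcx'
  rw [hseteq, shift_vol _ hA c hc, base_slice hδ hr0 hr]
  congr 2
  have : circDist x x' = circDist (T x) (T x') := (hT_circ x x' ⟨hx0, hx1⟩ ⟨hx0', hx1'⟩).symm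
  rw [this, hTx, ← hδ_def]
  unfold circDist
  rw [show (0:ℝ) - δ = -δ by ring, abs_neg, abs_of_nonneg hδ.1]

lemma main_integral {x x' ε ε' : ℝ} (hx : x ∈ Ico (0:ℝ) 1) (hx' : x' ∈ Ico (0:ℝ) 1)
    (hε : 0 < ε) (hε' : ε' ≤ 1/2)
    (hb : max (circDist x x') ε ≤ ε') :
    ∫ p in {p : ℝ × ℝ | p.1 ∈ Ico (0:ℝ) 1 ∧ p.2 ∈ Ico ε ε'
        ∧ circDist p.1 x ≤ p.2/2 ∧ circDist p.1 x' ≤ p.2/2}, (1 / p.2^2 : ℝ)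
      = Real.log ε' + (circDist x x') * ε'⁻¹
        - (Real.log (max (circDist x x') ε) + (circDist x x') * (max (circDist x x') ε)⁻¹) := by
  set d := circDist x x' with hd_def
  set b := max d ε with hb_def
  have hεε' : ε ≤ ε' := le_trans (le_max_right _ _) hb
  have hbε : ε ≤ b := le_max_right _ _
  have hb0 : 0 < b := lt_of_lt_of_le hε hbε
  have hdb : d ≤ b := le_max_left _ _
  have hd0 : 0 ≤ d := by
    rw [hd_def]; unfold circDist
    rcases hx with ⟨h1, h2⟩; rcases hx' with ⟨h3, h4⟩
    rcases abs_cases (x - x') with ⟨e1, _⟩ | ⟨e1, _⟩ <;> rw [e1] <;>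
      simp only [le_min_iff] <;> constructor <;> linarith
  set S : Set (ℝ × ℝ) := {p : ℝ × ℝ | p.1 ∈ Ico (0:ℝ) 1 ∧ p.2 ∈ Ico ε ε'
        ∧ circDist p.1 x ≤ p.2/2 ∧ circDist p.1 x' ≤ p.2/2} with hS_def
  have hS : MeasurableSet S := by
    apply MeasurableSet.inter
    · exact measurable_fst measurableSet_Ico
    apply MeasurableSet.inter
    · exact measurable_snd measurableSet_Ico
    apply MeasurableSet.inter
    · exact measurableSet_le
        (((continuous_circDist_left x).comp continuous_fst).measurable)
        ((continuous_snd.div_const 2).measurable)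
    · exact measurableSet_le
        (((continuous_circDist_left x').comp continuous_fst).measurable)
        ((continuous_snd.div_const 2).measurable)
  set g : ℝ × ℝ → ℝ := fun p => 1 / p.2^2 with hg_def
  have hgm : Measurable g := ((measurable_snd.pow_const 2).const_div 1)
  -- integrability
  have hbox : MeasurableSet (Ico (0:ℝ) 1 ×ˢ Ico ε ε') := measurableSet_Ico.prod measurableSet_Ico
  have hSbox : S ⊆ Ico (0:ℝ) 1 ×ˢ Ico ε ε' := by
    rintro p ⟨h1, h2, _⟩; exact ⟨h1, h2⟩
  have hint : Integrable (S.indicator g) (volume : Measure (ℝ × ℝ)) := by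
    apply Integrable.mono' (g := (Ico (0:ℝ) 1 ×ˢ Ico ε ε').indicator (fun _ => 1/ε^2))
    · rw [integrable_indicator_iff hbox]
      refine integrableOn_const (ne_of_lt ?_)
      rw [Measure.volume_eq_prod, Measure.prod_prod, Real.volume_Ico, Real.volume_Ico]
      exact ENNReal.mul_lt_top ENNReal.ofReal_lt_top ENNReal.ofReal_lt_top
    · exact (hgm.indicator hS).aestronglyMeasurable
    · apply Filter.Eventually.of_forall
      intro p
      by_cases hp : p ∈ S
      · rw [indicator_of_mem hp, indicator_of_mem (hSbox hp)]
        have hp2 : ε ≤ p.2 := hp.2.1.1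
        have hp2' : 0 < p.2 := lt_of_lt_of_le hε hp2
        rw [hg_def]
        simp only [Real.norm_eq_abs]
        rw [abs_of_nonneg (by positivity)]
        apply div_le_div_of_nonneg_left one_pos.le (by positivity)
        exact pow_le_pow_left₀ hε.le hp2 2
      · rw [indicator_of_notMem hp]
        simp only [norm_zero]
        apply indicator_nonneg
        intro _ _
        positivity
  -- Fubini
  rw [← integral_indicator hS, Measure.volume_eq_prod,
    MeasureTheory.integral_prod_symm _ (by rw [← Measure.volume_eq_prod]; exact hint)]
  have hinner : ∀ y : ℝ, (∫ s : ℝ, S.indicator g (s, y))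
      = (Ico ε ε').indicator (fun y => (max 0 (y - d)) * (1/y^2)) y := by
    intro y
    by_cases hy : y ∈ Ico ε ε'
    · have hy0 : 0 < y := lt_of_lt_of_le hε hy.1
      have hslice : (fun s : ℝ => S.indicator g (s, y))
          = ({s ∈ Ico (0:ℝ) 1 | circDist s x ≤ y/2 ∧ circDist s x' ≤ y/2}).indicator
              (fun _ => 1/y^2) := by
        funext s
        by_cases hs : (s, y) ∈ S
        · rw [indicator_of_mem hs, indicator_of_mem (by exact ⟨hs.1, hs.2.2⟩)]
        · rw [indicator_of_notMem hs, indicator_of_notMem ?_]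
          intro ⟨m1, m2, m3⟩
          exact hs ⟨m1, hy, m2, m3⟩
      rw [hslice, integral_indicator_const _ ?meas]
      case meas =>
        exact (measurableSet_Ico.inter
          (((measurableSet_le (continuous_circDist_left x).measurable
              measurable_const)).inter
            (measurableSet_le (continuous_circDist_left x').measurable
              measurable_const)))
      rw [indicator_of_mem hy]
      have hr0 : 0 < y/2 := by linarith
      have hr4 : y/2 < 1/4 := by
        have := hy.2; linarith [lt_of_lt_of_le this hε']
      rw [measureReal_def, slice_vol hx hx' hr0 hr4]
      rw [ENNReal.toReal_ofReal (le_max_left _ _)]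
      rw [smul_eq_mul]
      congr 2
      rw [← hd_def]
      ring
    · rw [indicator_of_notMem hy]
      have : (fun s : ℝ => S.indicator g (s, y)) = fun _ => 0 := by
        funext s
        apply indicator_of_notMem
        intro ⟨_, m2, _⟩
        exact hy m2
      rw [this, integral_zero]
  rw [integral_congr_ae (Filter.Eventually.of_forall hinner)]
  rw [integral_indicator measurableSet_Ico]
  rw [show (volume : Measure ℝ).restrict (Ico ε ε')
      = (volume : Measure ℝ).restrict (Ioc ε ε') from MeasureTheory.restrict_Ico_eq_restrict_Ioc]
  rw [← intervalIntegral.integral_of_le hεε']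
  -- split the interval at b
  have hcont : ∀ a' b' : ℝ, 0 < a' → a' ≤ b' →
      IntervalIntegrable (fun y => max 0 (y - d) * (1/y^2)) volume a' b' := by
    intro a' b' ha' hab'
    apply ContinuousOn.intervalIntegrable
    apply ContinuousOn.mul
    · exact (continuous_const.max (continuous_id.sub continuous_const)).continuousOn
    · apply ContinuousOn.div continuousOn_const (continuousOn_pow 2)
      intro y hy
      rw [uIcc_of_le hab', mem_Icc] at hy
      have : 0 < y := lt_of_lt_of_le ha' hy.1
      positivity
  rw [← intervalIntegral.integral_add_adjacent_intervals (b := b)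
    (hcont ε b hε hbε) (hcont b ε' hb0 hb)]
  have hfirst : ∫ y in ε..b, max 0 (y - d) * (1/y^2) = 0 := by
    rcases le_or_gt d ε with hcase | hcase
    · have : b = ε := max_eq_right hcase
      rw [this, intervalIntegral.integral_same]
    · have hbd : b = d := max_eq_left hcase.le
      rw [intervalIntegral.integral_congr (g := fun _ => (0:ℝ)) ?eq,
        intervalIntegral.integral_const, smul_zero]
      case eq =>
        intro y hy
        rw [uIcc_of_le hbε, mem_Icc] at hy
        have : y - d ≤ 0 := by rw [hbd] at hy; linarith [hy.2]
        simp only [max_eq_left this, zero_mul]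
  rw [hfirst, zero_add]
  have hsecond : ∫ y in b..ε', max 0 (y - d) * (1/y^2)
      = (Real.log ε' + d * ε'⁻¹) - (Real.log b + d * b⁻¹) := by
    rw [intervalIntegral.integral_congr (g := fun y => 1/y - d/y^2) ?eq2]
    case eq2 =>
      intro y hy
      dsimp only
      rw [uIcc_of_le hb, mem_Icc] at hy
      have hy0 : 0 < y := lt_of_lt_of_le hb0 hy.1
      have hyd : 0 ≤ y - d := by linarith [le_trans hdb hy.1]
      rw [max_eq_right hyd]
      field_simp
    apply intervalIntegral.integral_eq_sub_of_hasDerivAt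
    · intro y hy
      rw [uIcc_of_le hb, mem_Icc] at hy
      have hy0 : 0 < y := lt_of_lt_of_le hb0 hy.1
      have h1 : HasDerivAt Real.log y⁻¹ y := Real.hasDerivAt_log (ne_of_gt hy0)
      have h2 : HasDerivAt (fun z : ℝ => z⁻¹) (-(y^2)⁻¹) y := hasDerivAt_inv (ne_of_gt hy0)
      have h3 : HasDerivAt (fun z : ℝ => d * z⁻¹) (d * -(y^2)⁻¹) y := h2.const_mul d
      have := h1.add h3
      convert this using 1
      · rfl
      field_simp
      ring
    · apply ContinuousOn.intervalIntegrable
      apply ContinuousOn.sub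
      · apply ContinuousOn.div continuousOn_const continuousOn_id
        intro y hy
        rw [uIcc_of_le hb, mem_Icc] at hy
        exact ne_of_gt (lt_of_lt_of_le hb0 hy.1)
      · apply ContinuousOn.div continuousOn_const (continuousOn_pow 2)
        intro y hy
        rw [uIcc_of_le hb, mem_Icc] at hy
        have : 0 < y := lt_of_lt_of_le hb0 hy.1
        positivity
  rw [hsecond]

lemma coneDiff_inter {x x' ε ε' : ℝ} (hεε' : ε ≤ ε') (hε' : ε' ≤ 1/2) :
    (coneSet ε x \ coneSet ε' x) ∩ coneSet ε x'
      = {p : ℝ × ℝ | p.1 ∈ Ico (0:ℝ) 1 ∧ p.2 ∈ Ico ε ε'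
          ∧ circDist p.1 x ≤ p.2/2 ∧ circDist p.1 x' ≤ p.2/2} := by
  ext p
  simp only [mem_inter_iff, mem_diff, mem_setOf_eq, coneSet, mem_Ico]
  constructor
  · rintro ⟨⟨⟨h1, h2, h3⟩, hn⟩, _, h2', h3'⟩
    have hlt : p.2 < ε' := by
      by_contra hge
      push_neg at hge
      exact hn ⟨h1, hge, h3⟩
    have hF : coneF p.2 = p.2 := if_pos (by linarith)
    rw [hF] at h3 h3'
    exact ⟨h1, ⟨h2, hlt⟩, h3, h3'⟩
  · rintro ⟨h1, ⟨h2, hlt⟩, h3, h3'⟩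
    have hF : coneF p.2 = p.2 := if_pos (by linarith)
    refine ⟨⟨⟨h1, h2, by rw [hF]; exact h3⟩, ?_⟩, h1, by linarith, by rw [hF]; exact h3'⟩
    rintro ⟨_, hge, _⟩
    linarith

lemma coneDiff_self {x ε ε' : ℝ} : coneSet ε x \ coneSet ε' x
    = (coneSet ε x \ coneSet ε' x) ∩ coneSet ε x :=
  (inter_eq_left.2 diff_subset).symm

lemma cone_empty {x x' ε ε' : ℝ} (hx : x ∈ Ico (0:ℝ) 1) (hx' : x' ∈ Ico (0:ℝ) 1)
    (hεε' : ε ≤ ε') (hε' : ε' ≤ 1/2) (hd : ε' ≤ circDist x x') :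
    (coneSet ε x \ coneSet ε' x) ∩ coneSet ε x' = ∅ := by
  rw [coneDiff_inter hεε' hε']
  ext p
  simp only [mem_setOf_eq, mem_empty_iff_false, iff_false]
  rintro ⟨h1, ⟨_, hlt⟩, h3, h3'⟩
  have := circDist_triangle' h1 hx hx'
  linarith

lemma fin_div_mem {N : ℕ} (hN : 0 < N) (i : Fin N) : (i : ℝ)/N ∈ Ico (0:ℝ) 1 := by
  have hN' : (0:ℝ) < N := Nat.cast_pos.2 hN
  constructor
  · positivity
  · rw [div_lt_one hN']
    exact_mod_cast i.isLt

lemma circDist_fin {N : ℕ} (hN : 0 < N) {i j : Fin N} (hij : i ≠ j) :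
    1/(N:ℝ) ≤ circDist ((i:ℝ)/N) ((j:ℝ)/N) := by
  have hN' : (0:ℝ) < N := Nat.cast_pos.2 hN
  have hij' : ((i:ℕ):ℤ) ≠ ((j:ℕ):ℤ) := by
    intro h
    exact hij (Fin.ext (by exact_mod_cast h))
  have h1z : 1 ≤ |((i:ℕ):ℤ) - ((j:ℕ):ℤ)| := Int.one_le_abs (sub_ne_zero.2 hij')
  have h1 : (1:ℝ) ≤ |(i:ℝ) - (j:ℝ)| := by exact_mod_cast h1z
  have hiN : (i:ℝ) + 1 ≤ N := by exact_mod_cast i.isLt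
  have hjN : (j:ℝ) + 1 ≤ N := by exact_mod_cast j.isLt
  have hi0 : (0:ℝ) ≤ (i:ℝ) := Nat.cast_nonneg _
  have hj0 : (0:ℝ) ≤ (j:ℝ) := Nat.cast_nonneg _
  have h2 : |(i:ℝ) - (j:ℝ)| ≤ (N:ℝ) - 1 := abs_le.2 ⟨by linarith, by linarith⟩
  unfold circDist
  have habs : |(i:ℝ)/N - (j:ℝ)/N| = |(i:ℝ) - (j:ℝ)|/N := by
    rw [div_sub_div_same, abs_div, abs_of_pos hN']
  rw [habs]
  apply le_min
  · gcongr
  · have ht : |(i:ℝ) - (j:ℝ)|/N ≤ ((N:ℝ)-1)/N := by gcongr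
    have : ((N:ℝ)-1)/N = 1 - 1/N := by field_simp
    linarith

/-- Covariances of the increment field `X̃_x = X_x − X_x(α)`: there is a constant `C`
(uniform in `N`) such that whenever the second moments of `(X̃, X)` are given by the
`θ`-measure of the corresponding cone regions, one has `E[X̃_x²] = E[X̃_x X_x] = (1−α) log N`,
`|E[X̃_x X_{x'}] − (q(x,x')−α) log N| ≤ C` if `α < q(x,x') ≤ 1`, and `E[X̃_x X_{x'}] = 0`
if `q(x,x') ≤ α`. -/
theorem stmt4 : ∃ C : ℝ, ∀ (N : ℕ), 2 < N → ∀ α ∈ Set.Ioo (0 : ℝ) 1,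
    (∃ m : ℕ, (m : ℝ) = (N : ℝ) ^ α) →
    ∀ (Ω : Type) [MeasurableSpace Ω] (P : Measure Ω) [IsProbabilityMeasure P]
      (X Xt : ℝ → Ω → ℝ),
    (∀ x : ℝ, ∫ ω, (Xt x ω) ^ 2 ∂P
        = ∫ p in coneSet (1 / N) x \ coneSet ((1 / N : ℝ) ^ α) x, 1 / p.2 ^ 2) →
    (∀ x x' : ℝ, ∫ ω, Xt x ω * X x' ω ∂P
        = ∫ p in (coneSet (1 / N) x \ coneSet ((1 / N : ℝ) ^ α) x) ∩ coneSet (1 / N) x',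
            1 / p.2 ^ 2) →
    (∀ i : Fin N,
        (∫ ω, (Xt ((i : ℝ) / N) ω) ^ 2 ∂P = (1 - α) * Real.log N) ∧
        ∫ ω, Xt ((i : ℝ) / N) ω * X ((i : ℝ) / N) ω ∂P = (1 - α) * Real.log N) ∧
    (∀ i j : Fin N, i ≠ j →
        (α < overlap N ((i : ℝ) / N) ((j : ℝ) / N) →
          |(∫ ω, Xt ((i : ℝ) / N) ω * X ((j : ℝ) / N) ω ∂P)
              - (overlap N ((i : ℝ) / N) ((j : ℝ) / N) - α) * Real.log N| ≤ C) ∧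
        (overlap N ((i : ℝ) / N) ((j : ℝ) / N) ≤ α →
          ∫ ω, Xt ((i : ℝ) / N) ω * X ((j : ℝ) / N) ω ∂P = 0)) := by
  refine ⟨1, ?_⟩
  intro N hN α hα hm Ω _ P _ X Xt H1 H2
  obtain ⟨hα0, hα1⟩ := hα
  obtain ⟨m, hm⟩ := hm
  have hN0 : 0 < N := by omega
  have hN' : (0:ℝ) < N := Nat.cast_pos.2 hN0
  have hN1 : (1:ℝ) < N := by exact_mod_cast by omega
  have hlogN : 0 < Real.log N := Real.log_pos hN1
  set ε : ℝ := 1/(N:ℝ) with hε_def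
  set ε' : ℝ := (1/(N:ℝ)) ^ α with hε'_def
  have hε : 0 < ε := by positivity
  have hε'pos : 0 < ε' := Real.rpow_pos_of_pos hε α
  have hεlt : ε < ε' := by
    rw [hε'_def]
    calc ε = ε ^ (1:ℝ) := (Real.rpow_one ε).symm
    _ < ε ^ α := Real.rpow_lt_rpow_of_exponent_gt hε (by rw [hε_def]; rw [div_lt_one hN']; exact hN1) hα1
  have hεε' : ε ≤ ε' := hεlt.le
  have hm2 : (2:ℝ) ≤ m := by
    have h1 : (1:ℝ) < (N:ℝ) ^ α := by
      calc (1:ℝ) = (N:ℝ) ^ (0:ℝ) := (Real.rpow_zero _).symm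
      _ < (N:ℝ) ^ α := Real.rpow_lt_rpow_of_exponent_lt hN1 hα0
    have : 1 < m := by exact_mod_cast hm ▸ h1
    exact_mod_cast this
  have hε'inv : ε' = ((N:ℝ) ^ α)⁻¹ := by
    rw [hε'_def, one_div, Real.inv_rpow hN'.le]
  have hε'half : ε' ≤ 1/2 := by
    rw [hε'inv, ← hm]
    rw [inv_le_comm₀ (by linarith) (by norm_num)]
    linarith
  have hlogε' : Real.log ε' = -α * Real.log N := by
    rw [hε'_def, Real.log_rpow hε, hε_def, one_div, Real.log_inv]
    ring
  have hlogε : Real.log ε = -Real.log N := by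
    rw [hε_def, one_div, Real.log_inv]
  constructor
  · intro i
    set x : ℝ := (i:ℝ)/N with hx_def
    have hx : x ∈ Ico (0:ℝ) 1 := fin_div_mem hN0 i
    have hdxx : circDist x x = 0 := by
      unfold circDist; rw [sub_self, abs_zero]; norm_num
    have hmaxε : max (circDist x x) ε = ε := by rw [hdxx]; exact max_eq_right hε.le
    have hval := main_integral hx hx hε hε'half (by rw [hmaxε]; exact hεε')
    rw [hmaxε, hdxx] at hval
    simp only [zero_mul, add_zero, sub_zero] at hval
    have hgoal : Real.log ε' - Real.log ε = (1 - α) * Real.log N := by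
      rw [hlogε', hlogε]; ring
    constructor
    · rw [H1 x, coneDiff_self (ε' := ε'), coneDiff_inter hεε' hε'half, hval, hgoal]
    · rw [H2 x x, coneDiff_inter hεε' hε'half, hval, hgoal]
  · intro i j hij
    set x : ℝ := (i:ℝ)/N with hx_def
    set x' : ℝ := (j:ℝ)/N with hx'_def
    have hx : x ∈ Ico (0:ℝ) 1 := fin_div_mem hN0 i
    have hx' : x' ∈ Ico (0:ℝ) 1 := fin_div_mem hN0 j
    set d : ℝ := circDist x x' with hd_def
    have hd1N : ε ≤ d := circDist_fin hN0 hij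
    have hd0 : 0 < d := lt_of_lt_of_le hε hd1N
    have hmaxd : max d ε = d := max_eq_left hd1N
    constructor
    · intro hq
      have hq' : α * Real.log N < -Real.log d := by
        rw [overlap] at hq
        exact (lt_div_iff₀ hlogN).1 hq
      have hdε' : d < ε' := by
        have hlog : Real.log d < Real.log ε' := by rw [hlogε']; linarith
        exact (Real.log_lt_log_iff hd0 hε'pos).1 hlog
      have hval := main_integral hx hx' hε hε'half (by rw [hmaxd]; exact hdε'.le)
      rw [hmaxd] at hval
      rw [H2 x x', coneDiff_inter hεε' hε'half, hval]
      have hover : (overlap N x x' - α) * Real.log N = -Real.log d - α * Real.log N := by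
        rw [overlap, ← hd_def, sub_mul, div_mul_cancel₀ _ (ne_of_gt hlogN)]
      rw [hover, hlogε', mul_inv_cancel₀ (ne_of_gt hd0)]
      rw [show -α * Real.log ↑N + d * ε'⁻¹ - (Real.log d + 1) - (-Real.log d - α * Real.log ↑N)
        = d * ε'⁻¹ - 1 by ring]
      have h1 : d * ε'⁻¹ < 1 := by
        rw [← div_eq_mul_inv]
        exact (div_lt_one hε'pos).2 hdε'
      have h2 : 0 ≤ d * ε'⁻¹ := by positivity
      rw [abs_le]
      constructor <;> linarith
    · intro hq
      have hq' : -Real.log d ≤ α * Real.log N := by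
        rw [overlap] at hq
        exact (div_le_iff₀ hlogN).1 hq
      have hdε' : ε' ≤ d := by
        have hlog : Real.log ε' ≤ Real.log d := by rw [hlogε']; linarith
        exact (Real.log_le_log_iff hε'pos hd0).1 hlog
      rw [H2 x x', cone_empty hx hx' hεε' hε'half hdε']
      simp
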